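/- There exists an abelian periodic infinite word that has infinitely many abelian unbordered factors. Concretely, the image of the Thue–Morse word under the morphism τ: 0 ↦ 0110, 1 ↦ 1001 is abelian periodic with period 2 and admits infinitely many abelian unbordered factors. -/

import Mathlib

def factor {α : Type*} (w : ℕ → α) (i n : ℕ) : List α :=
  (List.range n).map (fun k => w (i + k))

def IsFactor {α : Type*} (u : List α) (w : ℕ → α) : Prop :=
  ∃ i, factor w i u.length = u

def AbelianEquiv {α : Type*} [DecidableEq α] (u v : List α) : Prop :=
  ∀ a : α, u.count a = v.count a

def AbelianBordered {α : Type*} [DecidableEq α] (u : List α) : Prop :=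
  ∃ p s : List α, p <+: u ∧ s <:+ u ∧ p ≠ [] ∧ p.length < u.length ∧ AbelianEquiv p s

/-- The Thue–Morse word (`tm n` is the parity of the binary digit sum of `n`). -/
def tm (n : ℕ) : ℕ := (Nat.digits 2 n).sum % 2

/-- The image of the Thue–Morse word under `τ : 0 ↦ 0110, 1 ↦ 1001`. -/
def tauTM (n : ℕ) : ℕ :=
  if n % 4 = 0 ∨ n % 4 = 3 then tm (n / 4) else 1 - tm (n / 4)

/-! ### Auxiliary lemmas -/

/-- binary digit sum -/
def sd (n : ℕ) : ℕ := (Nat.digits 2 n).sum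

lemma tm_eq (n : ℕ) : tm n = sd n % 2 := rfl

lemma tm_le (n : ℕ) : tm n ≤ 1 := by
  have := Nat.mod_lt (sd n) (show 0 < 2 by norm_num)
  rw [tm_eq]; omega

lemma sd_step (q b : ℕ) (hb : b < 2) : sd (2 * q + b) = b + sd q := by
  rcases Nat.eq_zero_or_pos (2 * q + b) with h | h
  · have hq : q = 0 := by omega
    have hb0 : b = 0 := by omega
    simp [hq, hb0, sd]
  · unfold sd
    rw [Nat.digits_def' (by norm_num : (1:ℕ) < 2) h]
    have h1 : (2 * q + b) % 2 = b := by omega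
    have h2 : (2 * q + b) / 2 = q := by omega
    rw [h1, h2, List.sum_cons]

lemma sd_pow_add (m : ℕ) : ∀ j, j < 2 ^ m → sd (2 ^ m + j) = 1 + sd j := by
  induction m with
  | zero =>
    intro j hj
    interval_cases j
    simp [sd]
  | succ m ih =>
    intro j hj
    have hb : j % 2 < 2 := Nat.mod_lt _ (by norm_num)
    have hq : j / 2 < 2 ^ m := by
      have : 2 ^ (m + 1) = 2 * 2 ^ m := by ring
      omega
    have he : 2 ^ (m + 1) + j = 2 * (2 ^ m + j / 2) + j % 2 := by
      have : 2 ^ (m + 1) = 2 * 2 ^ m := by ring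
      omega
    have hj' : j = 2 * (j / 2) + j % 2 := by omega
    have hsj : sd j = j % 2 + sd (j / 2) := by
      nth_rewrite 1 [hj']; exact sd_step _ _ hb
    rw [he, sd_step _ _ hb, ih _ hq, hsj]
    omega

lemma sd_compl (m : ℕ) : ∀ j, j < 2 ^ m → sd j + sd (2 ^ m - 1 - j) = m := by
  induction m with
  | zero =>
    intro j hj
    interval_cases j
    simp [sd]
  | succ m ih =>
    intro j hj
    have hb : j % 2 < 2 := Nat.mod_lt _ (by norm_num)
    have hq : j / 2 < 2 ^ m := by
      have : 2 ^ (m + 1) = 2 * 2 ^ m := by ring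
      omega
    have hj' : j = 2 * (j / 2) + j % 2 := by omega
    have he : 2 ^ (m + 1) - 1 - j = 2 * (2 ^ m - 1 - j / 2) + (1 - j % 2) := by
      have h2 : 2 ^ (m + 1) = 2 * 2 ^ m := by ring
      omega
    have hsj : sd j = j % 2 + sd (j / 2) := by
      nth_rewrite 1 [hj']; exact sd_step _ _ hb
    rw [he, sd_step _ _ (by omega), hsj]
    have := ih _ hq
    omega

/-- `4^t = 2^(2t)` as needed. -/
lemma four_pow (t : ℕ) : (4 : ℕ) ^ t = 2 ^ (2 * t) := by
  rw [show (4:ℕ) = 2 ^ 2 by norm_num, ← pow_mul]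

/-- Symmetry of Thue–Morse parities on blocks `[4^t, 2·4^t)`. -/
lemma tm_sym (t j : ℕ) (h : j < 4 ^ t) : tm (4 ^ t + j) = tm (4 ^ t + (4 ^ t - 1 - j)) := by
  have h2 : (4:ℕ) ^ t = 2 ^ (2 * t) := four_pow t
  have hj : j < 2 ^ (2 * t) := by omega
  have hj' : 4 ^ t - 1 - j < 2 ^ (2 * t) := by omega
  have e1 : sd (4 ^ t + j) = 1 + sd j := by rw [h2]; exact sd_pow_add _ _ hj
  have e2 : sd (4 ^ t + (4 ^ t - 1 - j)) = 1 + sd (4 ^ t - 1 - j) := by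
    rw [h2]; exact sd_pow_add _ _ (by rw [← h2]; omega)
  have e3 : sd j + sd (4 ^ t - 1 - j) = 2 * t := by
    rw [h2]
    exact sd_compl (2 * t) j hj
  rw [tm_eq, tm_eq, e1, e2]
  omega

/-! ### The word `tauTM` -/

lemma tauTM_r0 (q : ℕ) : tauTM (4 * q) = tm q := by
  have h1 : (4 * q) % 4 = 0 := by omega
  have h2 : (4 * q) / 4 = q := by omega
  simp [tauTM, h1, h2]

lemma tauTM_r1 (q : ℕ) : tauTM (4 * q + 1) = 1 - tm q := by
  have h1 : (4 * q + 1) % 4 = 1 := by omega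
  have h2 : (4 * q + 1) / 4 = q := by omega
  simp [tauTM, h1, h2]

lemma tauTM_r2 (q : ℕ) : tauTM (4 * q + 2) = 1 - tm q := by
  have h1 : (4 * q + 2) % 4 = 2 := by omega
  have h2 : (4 * q + 2) / 4 = q := by omega
  simp [tauTM, h1, h2]

lemma tauTM_r3 (q : ℕ) : tauTM (4 * q + 3) = tm q := by
  have h1 : (4 * q + 3) % 4 = 3 := by omega
  have h2 : (4 * q + 3) / 4 = q := by omega
  simp [tauTM, h1, h2]

lemma tauTM_le (n : ℕ) : tauTM n ≤ 1 := by
  unfold tauTM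
  split <;> [exact tm_le _; omega]

/-- Partial sums of `tauTM`. -/
def sig (m : ℕ) : ℕ := ∑ j ∈ Finset.range m, tauTM j

lemma sig_succ (m : ℕ) : sig (m + 1) = sig m + tauTM m := Finset.sum_range_succ _ _

lemma sig_r0 (q : ℕ) : sig (4 * q) = 2 * q := by
  induction q with
  | zero => simp [sig]
  | succ q ih =>
    have h : 4 * (q + 1) = (4 * q + 1 + 1 + 1) + 1 := by ring
    rw [h, sig_succ, sig_succ, sig_succ, sig_succ, ih,
      tauTM_r0, tauTM_r1, tauTM_r2, show 4*q+1+1+1 = 4*q+3 by ring, tauTM_r3]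
    have := tm_le q
    omega

lemma sig_r1 (q : ℕ) : sig (4 * q + 1) = 2 * q + tm q := by
  rw [sig_succ, sig_r0, tauTM_r0]

lemma sig_r2 (q : ℕ) : sig (4 * q + 2) = 2 * q + 1 := by
  rw [show 4*q+2 = (4*q+1)+1 by ring, sig_succ, sig_r1, tauTM_r1]
  have := tm_le q
  omega

lemma sig_r3 (q : ℕ) : sig (4 * q + 3) = 2 * q + 2 - tm q := by
  rw [show 4*q+3 = (4*q+2)+1 by ring, sig_succ, sig_r2, tauTM_r2]
  have := tm_le q
  omega

/-- Core parity lemma. -/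
lemma sig_parity (K a : ℕ) (h1 : 4 ^ (K + 1) ≤ a) (h2 : a ≤ 2 * 4 ^ (K + 1)) :
    (sig a + sig (3 * 4 ^ (K + 1) - a)) % 2 = 0 := by
  set Q := (4 : ℕ) ^ K with hQ
  have h4 : (4 : ℕ) ^ (K + 1) = 4 * Q := by rw [hQ, pow_succ]; ring
  have hQpos : 0 < Q := Nat.pow_pos (by norm_num)
  obtain ⟨q, r, hr4, ha⟩ : ∃ q r, r < 4 ∧ a = 4 * q + r := ⟨a / 4, a % 4, by omega, by omega⟩
  have hsym : ∀ q', Q ≤ q' → q' < 2 * Q → tm q' = tm (3 * Q - 1 - q') := by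
    intro q' hl hu
    have hj : q' - Q < 4 ^ K := by omega
    have := tm_sym K (q' - Q) hj
    rw [show 4 ^ K + (q' - Q) = q' by omega,
        show 4 ^ K + (4 ^ K - 1 - (q' - Q)) = 3 * Q - 1 - q' by omega] at this
    exact this
  subst ha
  interval_cases r
  · -- r = 0
    have hb : 3 * 4 ^ (K + 1) - (4 * q + 0) = 4 * (3 * Q - q) := by omega
    rw [hb, show (4:ℕ) * q + 0 = 4 * q by ring, sig_r0, sig_r0]
    omega
  · -- r = 1
    have hql : Q ≤ q := by omega
    have hqu : q < 2 * Q := by omega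
    have hb : 3 * 4 ^ (K + 1) - (4 * q + 1) = 4 * (3 * Q - 1 - q) + 3 := by omega
    rw [hb, sig_r1, sig_r3]
    have := hsym q hql hqu
    have h1' := tm_le q
    have h2' := tm_le (3 * Q - 1 - q)
    omega
  · -- r = 2
    have hb : 3 * 4 ^ (K + 1) - (4 * q + 2) = 4 * (3 * Q - 1 - q) + 2 := by omega
    rw [hb, sig_r2, sig_r2]
    omega
  · -- r = 3
    have hql : Q ≤ q := by omega
    have hqu : q < 2 * Q := by omega
    have hb : 3 * 4 ^ (K + 1) - (4 * q + 3) = 4 * (3 * Q - 1 - q) + 1 := by omega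
    rw [hb, sig_r3, sig_r1]
    have := hsym q hql hqu
    have h1' := tm_le q
    have h2' := tm_le (3 * Q - 1 - q)
    omega

lemma sig_start (K : ℕ) : sig (4 ^ (K + 1) - 1) = 2 * 4 ^ K := by
  have h4 : (4 : ℕ) ^ (K + 1) = 4 * 4 ^ K := by rw [pow_succ]; ring
  have hQpos : 0 < (4:ℕ) ^ K := Nat.pow_pos (by norm_num)
  have he : 4 ^ (K + 1) - 1 = 4 * (4 ^ K - 1) + 3 := by omega
  rw [he, sig_r3]
  have htm : tm (4 ^ K - 1) = 0 := by
    have h2 : (4:ℕ) ^ K = 2 ^ (2 * K) := four_pow K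
    have h3 := sd_compl (2 * K) 0 (by positivity)
    have h0 : sd 0 = 0 := by simp [sd]
    rw [tm_eq, show (4:ℕ)^K - 1 = 2 ^ (2*K) - 1 - 0 by omega]
    omega
  omega

lemma sig_end (K : ℕ) : sig (2 * 4 ^ (K + 1) + 1) = 4 * 4 ^ K + 1 := by
  have h4 : (2:ℕ) * 4 ^ (K + 1) = 4 * (2 * 4 ^ K) := by rw [pow_succ]; ring
  rw [show 2 * 4 ^ (K+1) + 1 = 4 * (2 * 4 ^ K) + 1 by omega, sig_r1]
  have htm : tm (2 * 4 ^ K) = 1 := by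
    have h2 : (2:ℕ) * 4 ^ K = 2 ^ (2 * K + 1) := by rw [four_pow]; ring
    rw [tm_eq, h2]
    have h1 := sd_pow_add (2 * K + 1) 0 (by positivity)
    have h0 : sd 0 = 0 := by simp [sd]
    rw [show (2:ℕ) ^ (2*K+1) = 2 ^ (2*K+1) + 0 by omega]
    omega
  omega

/-! ### List-level lemmas -/

lemma count_sum (l : List ℕ) (h : ∀ x ∈ l, x ≤ 1) : l.count 1 = l.sum := by
  induction l with
  | nil => simp
  | cons x l ih =>
    have hx : x ≤ 1 := h x (by simp)
    have hl : ∀ y ∈ l, y ≤ 1 := fun y hy => h y (by simp [hy])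
    rw [List.count_cons, List.sum_cons, ih hl]
    interval_cases x <;> simp <;> omega

lemma count_len (l : List ℕ) (h : ∀ x ∈ l, x ≤ 1) : l.count 0 + l.count 1 = l.length := by
  induction l with
  | nil => simp
  | cons x l ih =>
    have hx : x ≤ 1 := h x (by simp)
    have hl : ∀ y ∈ l, y ≤ 1 := fun y hy => h y (by simp [hy])
    rw [List.count_cons, List.count_cons, List.length_cons]
    have := ih hl
    interval_cases x <;> simp <;> omega

lemma factor_length {α : Type*} (w : ℕ → α) (i n : ℕ) : (factor w i n).length = n := by
  simp [factor]

lemma factor_sum (i m : ℕ) : (factor tauTM i m).sum + sig i = sig (i + m) := by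
  induction m with
  | zero => simp [factor, sig]
  | succ m ih =>
    rw [show i + (m + 1) = (i + m) + 1 by ring, sig_succ, ← ih]
    simp [factor, List.range_succ]
    omega

lemma factor_take (i n m : ℕ) (h : m ≤ n) :
    (factor tauTM i n).take m = factor tauTM i m := by
  unfold factor
  rw [← List.map_take, List.take_range, min_eq_left h]

lemma factor_mem_le (i n : ℕ) : ∀ x ∈ factor tauTM i n, x ≤ 1 := by
  intro x hx
  simp only [factor, List.mem_map] at hx
  obtain ⟨k, _, rfl⟩ := hx
  exact tauTM_le _

/-- The main family: factors of length `4^(K+1) + 2` starting at `4^(K+1) - 1`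
are abelian unbordered. -/
lemma main_unbordered (K : ℕ) :
    ¬ AbelianBordered (factor tauTM (4 ^ (K + 1) - 1) (4 ^ (K + 1) + 2)) := by
  set i := 4 ^ (K + 1) - 1 with hi
  set n := 4 ^ (K + 1) + 2 with hn
  set u := factor tauTM i n with hu
  rintro ⟨p, s, hp, hs, hne, hlt, heq⟩
  have hQpos : 0 < (4:ℕ) ^ (K+1) := Nat.pow_pos (by norm_num)
  have hulen : u.length = n := factor_length _ _ _
  have hule : ∀ x ∈ u, x ≤ 1 := factor_mem_le _ _
  have hple : ∀ x ∈ p, x ≤ 1 := fun x hx => hule x (hp.sublist.subset hx)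
  have hsle : ∀ x ∈ s, x ≤ 1 := fun x hx => hule x (hs.sublist.subset hx)
  -- lengths are equal
  have hlen : p.length = s.length := by
    have h0 := heq 0
    have h1 := heq 1
    have := count_len p hple
    have := count_len s hsle
    omega
  set k := p.length with hk
  have hk1 : 1 ≤ k := List.length_pos_iff.mpr hne
  have hkn : k < n := by omega
  -- p and s as take/drop
  have hpeq : p = u.take k := List.prefix_iff_eq_take.mp hp
  have hseq : s = u.drop (n - k) := by
    have := List.suffix_iff_eq_drop.mp hs
    rw [hulen, ← hlen] at this
    exact this
  -- counts via sig
  have hcount : ∀ m, m ≤ n → (u.take m).count 1 + sig i = sig (i + m) := by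
    intro m hm
    rw [hu, factor_take i n m hm, count_sum _ (factor_mem_le _ _)]
    exact factor_sum i m
  have hCp : (u.take k).count 1 + sig i = sig (i + k) := hcount k (le_of_lt hkn)
  have hsplit : (u.take (n - k)).count 1 + (u.drop (n - k)).count 1 = u.count 1 := by
    rw [← List.count_append, List.take_append_drop]
  have hCnk : (u.take (n - k)).count 1 + sig i = sig (i + (n - k)) := hcount (n - k) (by omega)
  have hCu : u.count 1 + sig i = sig (i + n) := by
    have : u.take n = u := by rw [← hulen]; exact List.take_length
    rw [← this]; exact hcount n le_rfl
  -- numeric facts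
  have hsi : sig i = 2 * 4 ^ K := sig_start K
  have hsn : sig (i + n) = 4 * 4 ^ K + 1 := by
    rw [show i + n = 2 * 4 ^ (K + 1) + 1 by omega]
    exact sig_end K
  have h4 : (4:ℕ) ^ (K + 1) = 4 * 4 ^ K := by rw [pow_succ]; ring
  have hpar : (sig (i + k) + sig (3 * 4 ^ (K + 1) - (i + k))) % 2 = 0 :=
    sig_parity K (i + k) (by omega) (by omega)
  have hrw : 3 * 4 ^ (K + 1) - (i + k) = i + (n - k) := by omega
  rw [hrw] at hpar
  -- the contradiction
  have hc1 := heq 1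
  rw [hpeq, hseq] at hc1
  have hfin : sig (i + k) + sig (i + (n - k)) = 6 * 4 ^ K + 1 := by omega
  omega

theorem stmt_14 :
    (∀ i, AbelianEquiv (factor tauTM (2 * i) 2) (factor tauTM 0 2)) ∧
    {u : List ℕ | IsFactor u tauTM ∧ ¬ AbelianBordered u}.Infinite := by
  constructor
  · -- abelian periodicity with period 2
    intro i a
    have h2 : ∀ j : ℕ, factor tauTM j 2 = [tauTM j, tauTM (j + 1)] := by
      intro j
      simp [factor, List.range_succ]
    rw [h2, h2]
    have h0 : tauTM 0 = 0 := by norm_num [tauTM, tm]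
    have h1 : tauTM 1 = 1 := by norm_num [tauTM, tm]
    rw [show (0:ℕ) + 1 = 1 by rfl, h0, h1]
    rcases Nat.even_or_odd i with ⟨j, hj⟩ | ⟨j, hj⟩
    · have e0 : 2 * i = 4 * j := by omega
      have e1 : 2 * i + 1 = 4 * j + 1 := by omega
      rw [e1, e0, tauTM_r0, tauTM_r1]
      have := tm_le j
      interval_cases h : tm j <;> simp [List.count_cons] <;> omega
    · have e0 : 2 * i = 4 * j + 2 := by omega
      have e1 : 2 * i + 1 = 4 * j + 3 := by omega
      rw [e1, e0, tauTM_r2, tauTM_r3]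
      have := tm_le j
      interval_cases h : tm j <;> simp [List.count_cons] <;> omega
  · -- infinitely many abelian unbordered factors
    refine Set.infinite_of_injective_forall_mem
      (f := fun K : ℕ => factor tauTM (4 ^ (K + 1) - 1) (4 ^ (K + 1) + 2)) ?_ ?_
    · intro a b hab
      have : (4:ℕ) ^ (a + 1) + 2 = 4 ^ (b + 1) + 2 := by
        have := congrArg List.length hab
        simpa [factor_length] using this
      have h4 : (4:ℕ) ^ (a+1) = 4 ^ (b+1) := by omega
      have := Nat.pow_right_injective (by norm_num : 2 ≤ 4) h4
      omega
    · intro K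
      refine ⟨⟨4 ^ (K + 1) - 1, ?_⟩, main_unbordered K⟩
      rw [factor_length]
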